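/- Let Γ be a finite abelian group with nondegenerate symmetric bimultiplicative form B_Q (square of σ as in the standing assumptions), δ ∈ Γ with 2δ = 0, and q satisfying q(a)² = σ(a,a) and q(a+b)q(a)⁻¹q(b)⁻¹ = σ(a,b)ω(a+b,a,b)ω(δ,a,b). Define α²·q(r+s) := ε·|2Γ|^{-1/2}·Σ_{t ∈ r̄+s̄+δ̄} σ(t, r+s)·q(t)⁻¹ where the sum is over the 2Γ-coset of r+s+δ. Then this sum is independent of the decomposition: for all b ∈ Γ, ε·|2Γ|^{-1/2}·Σ_{t ∈ b̄+δ̄} σ(t,b)·q(t)⁻¹ = q(b) · (ε·|2Γ|^{-1/2}·Σ_{a ∈ δ̄} q(a)⁻¹), where δ̄, b̄ denote cosets modulo 2Γ. -/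

import Mathlib

open scoped Classical

/-- `∂(σ)(a;b,c) = σ(a,b) σ(a,c) σ(a,b+c)⁻¹`. -/
def dOmega {Γ : Type*} [AddCommGroup Γ] (σ : Γ → Γ → ℂˣ) (a b c : Γ) : ℂˣ :=
  σ a b * σ a c * (σ a (b + c))⁻¹

/-- Let `Γ` be a finite abelian group with nondegenerate symmetric bimultiplicative
`B_Q = σ²`, `σ` symmetric normalised with `ω = ∂(σ)` valued in `{±1}` and a
homomorphism in the first argument, `δ ∈ Γ` with `2δ = 0`, `q` satisfying
`q(a)² = σ(a,a)` and `q(a+b) q(a)⁻¹ q(b)⁻¹ = σ(a,b) ω(a+b,a,b) ω(δ,a,b)`, and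
`ε ∈ {±1}`. Then for all `b ∈ Γ`,
`ε |2Γ|^{-1/2} Σ_{t ∈ b̄+δ̄} σ(t,b) q(t)⁻¹ = q(b) · (ε |2Γ|^{-1/2} Σ_{a ∈ δ̄} q(a)⁻¹)`,
where the sums run over the indicated cosets of `2Γ`. -/
theorem stmt_19 (Γ : Type*) [AddCommGroup Γ] [Fintype Γ]
    (B σ : Γ → Γ → ℂˣ) (q : Γ → ℂˣ) (δ : Γ) (ε : ℂ)
    (hBsym : ∀ a b : Γ, B a b = B b a)
    (hBbi₁ : ∀ a a' b : Γ, B (a + a') b = B a b * B a' b)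
    (hBbi₂ : ∀ a b b' : Γ, B a (b + b') = B a b * B a b')
    (hBnd : ∀ a : Γ, (∀ b : Γ, B a b = 1) → a = 0)
    (hσsym : ∀ a b : Γ, σ a b = σ b a)
    (hσnorm : ∀ a : Γ, σ a 0 = 1 ∧ σ 0 a = 1)
    (hσsq : ∀ a b : Γ, (σ a b) ^ 2 = B a b)
    (hωpm : ∀ a b c : Γ, dOmega σ a b c = 1 ∨ dOmega σ a b c = -1)
    (hωhom : ∀ a a' b c : Γ, dOmega σ (a + a') b c = dOmega σ a b c * dOmega σ a' b c)
    (hδ : 2 • δ = 0)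
    (hq2 : ∀ a : Γ, (q a) ^ 2 = σ a a)
    (hqadd : ∀ a b : Γ, q (a + b) * (q a)⁻¹ * (q b)⁻¹ =
      σ a b * dOmega σ (a + b) a b * dOmega σ δ a b)
    (hε : ε = 1 ∨ ε = -1) :
    ∀ b : Γ,
      ε * ((Real.sqrt ((Finset.univ.filter fun x : Γ => ∃ c : Γ, x = 2 • c).card) : ℂ))⁻¹ *
          ∑ t ∈ Finset.univ.filter fun t : Γ => ∃ c : Γ, t = b + δ + 2 • c,
            ((σ t b : ℂˣ) : ℂ) * (((q t : ℂˣ) : ℂ))⁻¹ =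
        ((q b : ℂˣ) : ℂ) *
          (ε * ((Real.sqrt ((Finset.univ.filter fun x : Γ => ∃ c : Γ, x = 2 • c).card) : ℂ))⁻¹ *
            ∑ a ∈ Finset.univ.filter fun t : Γ => ∃ c : Γ, t = δ + 2 • c,
              (((q a : ℂˣ) : ℂ))⁻¹) := by
  intro b
  have nz : ∀ u : ℂˣ, (u : ℂ) ≠ 0 := fun u => u.ne_zero
  -- key pointwise identity
  have key : ∀ a : Γ, (∃ c : Γ, a = δ + 2 • c) →
      ((σ (a + b) b : ℂˣ) : ℂ) * (((q (a + b) : ℂˣ) : ℂ))⁻¹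
        = ((q b : ℂˣ) : ℂ) * (((q a : ℂˣ) : ℂ))⁻¹ := by
    rintro a ⟨c, rfl⟩
    set a := δ + 2 • c with ha
    -- product of the three omegas is 1
    have h1 : dOmega σ ((a + b) + δ + b) a b
        = dOmega σ (a + b) a b * dOmega σ δ a b * dOmega σ b a b := by
      rw [hωhom ((a + b) + δ) b a b, hωhom (a + b) δ a b]
    have heq : (a + b) + δ + b = (c + b + δ) + (c + b + δ) := by rw [ha]; abel
    have hsq : dOmega σ ((c + b + δ) + (c + b + δ)) a b = 1 := by
      rw [hωhom]
      rcases hωpm (c + b + δ) a b with h | h <;> rw [h] <;> norm_num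
    have hsum : dOmega σ (a + b) a b * dOmega σ δ a b * dOmega σ b a b = 1 := by
      rw [← h1, heq, hsq]
    -- express q (a + b) in ℂˣ
    have hqab : q (a + b)
        = σ a b * dOmega σ (a + b) a b * dOmega σ δ a b * q b * q a := by
      have h := hqadd a b
      rw [mul_inv_eq_iff_eq_mul, mul_inv_eq_iff_eq_mul] at h
      exact h
    -- express σ (a + b) b in ℂˣ
    have hS : σ b (a + b)
        = dOmega σ (a + b) a b * dOmega σ δ a b * (σ b a * σ b b) := by
      have h4 : (dOmega σ (a + b) a b * dOmega σ δ a b)⁻¹ * σ b (a + b)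
          = σ b a * σ b b := by
        rw [← eq_inv_of_mul_eq_one_right hsum]
        show σ b a * σ b b * (σ b (a + b))⁻¹ * σ b (a + b) = σ b a * σ b b
        exact inv_mul_cancel_right _ _
      exact inv_mul_eq_iff_eq_mul.mp h4
    -- cast to ℂ
    have e1 : ((q (a + b) : ℂˣ) : ℂ)
        = ((σ a b : ℂˣ) : ℂ) * ((dOmega σ (a + b) a b : ℂˣ) : ℂ)
            * ((dOmega σ δ a b : ℂˣ) : ℂ) * ((q b : ℂˣ) : ℂ) * ((q a : ℂˣ) : ℂ) := by
      have := congrArg Units.val hqab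
      simpa [Units.val_mul] using this
    have e2 : ((σ (a + b) b : ℂˣ) : ℂ)
        = ((dOmega σ (a + b) a b : ℂˣ) : ℂ) * ((dOmega σ δ a b : ℂˣ) : ℂ)
            * (((σ b a : ℂˣ) : ℂ) * ((σ b b : ℂˣ) : ℂ)) := by
      have := congrArg Units.val ((hσsym (a + b) b).trans hS)
      simpa [Units.val_mul] using this
    have e3 : ((σ b a : ℂˣ) : ℂ) = ((σ a b : ℂˣ) : ℂ) :=
      congrArg Units.val (hσsym b a)
    have e4 : ((σ b b : ℂˣ) : ℂ) = ((q b : ℂˣ) : ℂ) ^ 2 := by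
      have := congrArg Units.val (hq2 b)
      simpa using this.symm
    rw [e1, e2, e3, e4]
    have hd1 : ((dOmega σ (a + b) a b : ℂˣ) : ℂ) ≠ 0 := nz _
    have hd2 : ((dOmega σ δ a b : ℂˣ) : ℂ) ≠ 0 := nz _
    have hd3 : ((σ a b : ℂˣ) : ℂ) ≠ 0 := nz _
    have hd4 : ((q a : ℂˣ) : ℂ) ≠ 0 := nz _
    have hd5 : ((q b : ℂˣ) : ℂ) ≠ 0 := nz _
    field_simp
  -- reduce to the equality of sums
  suffices h : (∑ t ∈ Finset.univ.filter fun t : Γ => ∃ c : Γ, t = b + δ + 2 • c,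
        ((σ t b : ℂˣ) : ℂ) * (((q t : ℂˣ) : ℂ))⁻¹)
      = ((q b : ℂˣ) : ℂ) *
        ∑ a ∈ Finset.univ.filter fun t : Γ => ∃ c : Γ, t = δ + 2 • c,
          (((q a : ℂˣ) : ℂ))⁻¹ by
    rw [h]; ring
  rw [Finset.mul_sum]
  refine Finset.sum_bij' (fun t _ => t - b) (fun a _ => a + b) ?_ ?_ ?_ ?_ ?_
  · intro t ht
    simp only [Finset.mem_filter, Finset.mem_univ, true_and] at ht ⊢
    obtain ⟨c, rfl⟩ := ht
    exact ⟨c, by abel⟩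
  · intro a ha
    simp only [Finset.mem_filter, Finset.mem_univ, true_and] at ha ⊢
    obtain ⟨c, rfl⟩ := ha
    exact ⟨c, by abel⟩
  · intro t _
    show t - b + b = t
    abel
  · intro a _
    show a + b - b = a
    abel
  · intro t ht
    simp only [Finset.mem_filter, Finset.mem_univ, true_and] at ht
    obtain ⟨c, rfl⟩ := ht
    have hmem : ∃ c' : Γ, (b + δ + 2 • c) - b = δ + 2 • c' := ⟨c, by abel⟩
    have hk := key ((b + δ + 2 • c) - b) hmem
    have haddb : ((b + δ + 2 • c) - b) + b = b + δ + 2 • c := by abel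
    rw [haddb] at hk
    exact hk
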